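/- Let P(λ) = λ(J₁+R₁) + (J₂+R₂) be an n×n complex posH pencil. If ker R₁ ∩ ker R₂ = {0}, then the numerical range of P(λ) contains no positive real number: for every real α > 0 and every nonzero x ∈ ℂⁿ one has x*(α(J₁+R₁) + (J₂+R₂))x ≠ 0. -/

import Mathlib

open Matrix
open scoped ComplexOrder

lemma skew_quad_form_re {n : ℕ} (J : Matrix (Fin n) (Fin n) ℂ) (hJ : Jᴴ = -J)
    (x : Fin n → ℂ) : (star x ⬝ᵥ (J *ᵥ x)).re = 0 := by
  have h : star (star x ⬝ᵥ (J *ᵥ x)) = star x ⬝ᵥ (Jᴴ *ᵥ x) := by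
    rw [← star_dotProduct, star_mulVec, dotProduct_mulVec, vecMul_conjTranspose, star_star]
  rw [hJ, neg_mulVec, dotProduct_neg] at h
  have := congrArg Complex.re h
  simp only [Complex.star_def, Complex.conj_re, Complex.neg_re] at this
  linarith

/-- Theorem 4.5, (a) ⇒ (b): for a posH pencil `P(λ) = λ(J₁+R₁) + (J₂+R₂)`, if
`ker R₁ ∩ ker R₂ = {0}`, then the numerical range of `P(λ)` contains no positive
real number. -/
theorem posH_numrange_avoids_positive_reals {n : ℕ}
    (J₁ J₂ R₁ R₂ : Matrix (Fin n) (Fin n) ℂ)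
    (hJ₁ : J₁ᴴ = -J₁) (hJ₂ : J₂ᴴ = -J₂)
    (hR₁ : R₁.PosSemidef) (hR₂ : R₂.PosSemidef)
    (hker : ∀ x : Fin n → ℂ, R₁ *ᵥ x = 0 → R₂ *ᵥ x = 0 → x = 0) :
    ∀ (α : ℝ) (x : Fin n → ℂ), 0 < α → x ≠ 0 →
      star x ⬝ᵥ (((α : ℂ) • (J₁ + R₁) + (J₂ + R₂)) *ᵥ x) ≠ 0 := by
  intro α x hα hx h0
  apply hx
  have hexp : star x ⬝ᵥ (((α : ℂ) • (J₁ + R₁) + (J₂ + R₂)) *ᵥ x)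
      = (α : ℂ) * (star x ⬝ᵥ (J₁ *ᵥ x)) + (α : ℂ) * (star x ⬝ᵥ (R₁ *ᵥ x))
        + (star x ⬝ᵥ (J₂ *ᵥ x)) + (star x ⬝ᵥ (R₂ *ᵥ x)) := by
    simp [add_mulVec, smul_mulVec, dotProduct_add, dotProduct_smul, smul_eq_mul, mul_add]
    ring
  rw [hexp] at h0
  have hre := congrArg Complex.re h0
  have hr1 := hR₁.re_dotProduct_nonneg x
  have hr2 := hR₂.re_dotProduct_nonneg x
  simp only [RCLike.re_to_complex] at hr1 hr2
  simp only [Complex.add_re, Complex.mul_re, Complex.ofReal_re, Complex.ofReal_im,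
    skew_quad_form_re J₁ hJ₁ x, skew_quad_form_re J₂ hJ₂ x, Complex.zero_re] at hre
  -- hre : α * re(q R₁) + re(q R₂) = 0 (plus junk)
  have him1 : (star x ⬝ᵥ (R₁ *ᵥ x)).im = 0 := by
    have := hR₁.dotProduct_mulVec_nonneg x
    rw [RCLike.nonneg_iff] at this
    simpa using this.2
  have him2 : (star x ⬝ᵥ (R₂ *ᵥ x)).im = 0 := by
    have := hR₂.dotProduct_mulVec_nonneg x
    rw [RCLike.nonneg_iff] at this
    simpa using this.2
  rw [him1] at hre
  have h1re : (star x ⬝ᵥ (R₁ *ᵥ x)).re = 0 := by nlinarith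
  have h2re : (star x ⬝ᵥ (R₂ *ᵥ x)).re = 0 := by nlinarith
  have e1 : star x ⬝ᵥ (R₁ *ᵥ x) = 0 := Complex.ext h1re him1
  have e2 : star x ⬝ᵥ (R₂ *ᵥ x) = 0 := Complex.ext h2re him2
  exact hker x ((hR₁.dotProduct_mulVec_zero_iff x).mp e1)
    ((hR₂.dotProduct_mulVec_zero_iff x).mp e2)
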